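/- Let ⟨N, S, p, r, μ0⟩ be a finite-horizon Markov reward process with N ≥ 1 and let ⟨N−1, S × S, p†, r†, μ0†⟩ be its state-transition transformation. Then for every c ∈ ℝ, the total-reward cumulative distribution functions agree: Σ_{ω : Σ_{t<N} r (ω t) (ω (t+1)) ≤ c} μ0(ω 0) · ∏_{t=0}^{N-1} p (ω t) (ω (t+1)) = Σ_{ω† : Σ_{t<N} r† (ω† t) ≤ c} μ0†(ω† 0) · ∏_{t=0}^{N-2} p† (ω† t) (ω† (t+1)), where ω ranges over Fin (N+1) → S and ω† over Fin N → S × S. -/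

import Mathlib

open Classical in
/-- The total-reward cumulative distribution functions of a finite-horizon Markov
reward process (horizon `N = M + 1 ≥ 1`) and of its state-transition transformation
(horizon `M`, state space `S × S`, reward `r†(x,y) = r x y`, kernel
`p† (w,x) (x',y) = if x' = x then p x y else 0`, initial distribution
`μ0†(x,y) = μ0 x * p x y`) agree at every level `c ∈ ℝ`. -/
theorem stateTransitionTransformation_cdf_eq
    {S : Type} [Fintype S] [Nonempty S] [DecidableEq S]
    (M : ℕ)
    (p : S → S → ℝ) (hp0 : ∀ x y, 0 ≤ p x y) (hp1 : ∀ x, ∑ y, p x y = 1)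
    (r : S → S → ℝ)
    (μ0 : S → ℝ) (hμ0 : ∀ x, 0 ≤ μ0 x) (hμ1 : ∑ x, μ0 x = 1)
    (c : ℝ) :
    (∑ ω : Fin (M + 2) → S,
        if (∑ t : Fin (M + 1), r (ω t.castSucc) (ω t.succ)) ≤ c then
          μ0 (ω 0) * ∏ t : Fin (M + 1), p (ω t.castSucc) (ω t.succ)
        else 0)
    = ∑ ω' : Fin (M + 1) → S × S,
        if (∑ t : Fin (M + 1), r (ω' t).1 (ω' t).2) ≤ c then
          (μ0 (ω' 0).1 * p (ω' 0).1 (ω' 0).2) *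
            ∏ t : Fin M,
              (if (ω' t.succ).1 = (ω' t.castSucc).2
                then p (ω' t.castSucc).2 (ω' t.succ).2 else 0)
        else 0 := by
  classical
  set f : (Fin (M + 2) → S) → (Fin (M + 1) → S × S) :=
    fun ω t => (ω t.castSucc, ω t.succ) with hf
  have hinj : Function.Injective f := by
    intro a b hab
    funext k
    rcases Fin.eq_castSucc_or_eq_last k with ⟨t, rfl⟩ | h
    · exact congrArg Prod.fst (congrFun hab t)
    · subst h
      have := congrArg Prod.snd (congrFun hab (Fin.last M))
      simpa [hf, Fin.succ_last] using this
  set F : (Fin (M + 1) → S × S) → ℝ := fun ω' =>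
    if (∑ t : Fin (M + 1), r (ω' t).1 (ω' t).2) ≤ c then
      (μ0 (ω' 0).1 * p (ω' 0).1 (ω' 0).2) *
        ∏ t : Fin M,
          (if (ω' t.succ).1 = (ω' t.castSucc).2
            then p (ω' t.castSucc).2 (ω' t.succ).2 else 0)
    else 0 with hF
  have h0 : ∀ ω' ∈ (Finset.univ : Finset (Fin (M + 1) → S × S)),
      ω' ∉ Finset.univ.image f → F ω' = 0 := by
    intro ω' _ hω'
    have hex : ∃ t : Fin M, (ω' t.succ).1 ≠ (ω' t.castSucc).2 := by
      by_contra hc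
      push_neg at hc
      apply hω'
      refine Finset.mem_image.2
        ⟨Fin.cases (ω' 0).1 (fun i => (ω' i).2), Finset.mem_univ _, ?_⟩
      funext t
      simp only [hf]
      induction t using Fin.cases with
      | zero =>
        rw [Fin.castSucc_zero, Fin.cases_zero, Fin.cases_succ]
      | succ s =>
        have h1 : (s.succ.castSucc : Fin (M + 2)) = s.castSucc.succ :=
          (Fin.succ_castSucc s).symm
        refine Prod.ext ?_ ?_
        · simp [h1, hc s]
        · simp
    obtain ⟨t, ht⟩ := hex
    have : (∏ t : Fin M,
        (if (ω' t.succ).1 = (ω' t.castSucc).2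
          then p (ω' t.castSucc).2 (ω' t.succ).2 else 0)) = 0 :=
      Finset.prod_eq_zero (Finset.mem_univ t) (if_neg ht)
    simp [hF, this]
  calc
    (∑ ω : Fin (M + 2) → S,
        if (∑ t : Fin (M + 1), r (ω t.castSucc) (ω t.succ)) ≤ c then
          μ0 (ω 0) * ∏ t : Fin (M + 1), p (ω t.castSucc) (ω t.succ)
        else 0)
        = ∑ ω : Fin (M + 2) → S, F (f ω) := by
          refine Finset.sum_congr rfl fun ω _ => ?_
          have hidx : ∀ t : Fin M, (t.succ.castSucc : Fin (M + 2)) = t.castSucc.succ :=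
            fun t => (Fin.succ_castSucc t).symm
          have hprod : (∏ t : Fin (M + 1), p (ω t.castSucc) (ω t.succ))
              = p (ω 0) (ω 1) * ∏ t : Fin M, p (ω t.castSucc.succ) (ω t.succ.succ) := by
            rw [Fin.prod_univ_succ]
            simp only [Fin.castSucc_zero, Fin.succ_zero_eq_one]
            exact congrArg _ (Finset.prod_congr rfl fun t _ => by rw [hidx t])
          simp only [hF, hf, hidx, if_true, eq_self_iff_true, Fin.castSucc_zero,
            Fin.succ_zero_eq_one]
          rw [hprod, mul_assoc]
    _ = ∑ ω' ∈ Finset.univ.image f, F ω' :=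
          (Finset.sum_image fun a _ b _ h => hinj h).symm
    _ = ∑ ω' : Fin (M + 1) → S × S, F ω' :=
          Finset.sum_subset (Finset.subset_univ _) h0
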